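/- arXiv:0810.5423 — 5 statements merged into one kernel-verified Lean document; each statement's English description precedes it below -/
import Mathlib

section
/- For every real number q ≠ 1, every natural number k, and every natural number n ≥ 1, one has Σ_{γ=0}^{n−1} q^γ γ^k = (1/(1−q)) · Σ_{i=0}^{k} (q/(1−q))^i Δ^i 0^k − (q^n/(1−q)) · Σ_{i=0}^{k} (q/(1−q))^i Δ^i n^k. -/
open Finset Function fwdDiff

/-- The `i`-th forward finite difference of the function `γ ↦ γ^k` evaluated at the
point `a`, i.e. `Δ^i a^k = ∑_{j=0}^{i} (-1)^(i-j) C(i,j) (a+j)^k` (with `0^0 = 1`). -/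
noncomputable def finDiff (i k : ℕ) (a : ℝ) : ℝ :=
  ∑ j ∈ Finset.range (i + 1), (-1 : ℝ) ^ (i - j) * (i.choose j : ℝ) * (a + (j : ℝ)) ^ k

lemma finDiff_eq_iter (i k : ℕ) (a : ℝ) :
    finDiff i k a = (fwdDiff (1:ℝ))^[i] (fun x => x ^ k) a := by
  rw [fwdDiff_iter_eq_sum_shift, finDiff]
  refine Finset.sum_congr rfl fun j _ => ?_
  push_cast [zsmul_eq_mul, nsmul_eq_mul]
  ring

lemma fwdDiff_pow_eq (m : ℕ) :
    Δ_[(1:ℝ)] (fun x => x ^ m) =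
      fun x => ∑ l ∈ Finset.range m, (m.choose l : ℝ) * x ^ l := by
  ext x
  show (x + 1) ^ m - x ^ m = _
  rw [add_pow]
  simp [Finset.sum_range_succ, mul_comm]

lemma iter_pow_eq_zero : ∀ m i : ℕ, m < i → (fwdDiff (1:ℝ))^[i] (fun x => x ^ m) = 0 := by
  intro m
  induction m using Nat.strong_induction_on with
  | _ m IH =>
    intro i hi
    obtain ⟨i, rfl⟩ : ∃ j, i = j + 1 :=
      ⟨i - 1, (Nat.succ_pred_eq_of_pos (Nat.pos_of_ne_zero (by omega))).symm⟩
    rw [Function.iterate_succ_apply, fwdDiff_pow_eq]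
    have h : (fun x : ℝ => ∑ l ∈ Finset.range m, (m.choose l : ℝ) * x ^ l)
        = ∑ l ∈ Finset.range m, (m.choose l : ℝ) • (fun x : ℝ => x ^ l) := by
      ext x; simp
    rw [h, fwdDiff_iter_finset_sum]
    refine Finset.sum_eq_zero fun l hl => ?_
    rw [fwdDiff_iter_const_smul, IH l (Finset.mem_range.mp hl) i (by
      have := Finset.mem_range.mp hl; omega), smul_zero]

lemma finDiff_top (k : ℕ) (a : ℝ) : finDiff (k + 1) k a = 0 := by
  rw [finDiff_eq_iter, iter_pow_eq_zero k (k + 1) (Nat.lt_succ_self k)]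
  rfl

lemma finDiff_shift (i k : ℕ) (a : ℝ) :
    finDiff i k (a + 1) = finDiff i k a + finDiff (i + 1) k a := by
  rw [finDiff_eq_iter, finDiff_eq_iter, finDiff_eq_iter, Function.iterate_succ_apply']
  show _ = _ + (Δ_[(1:ℝ)] ((fwdDiff (1:ℝ))^[i] fun x => x ^ k)) a
  rw [fwdDiff]
  ring

lemma key (q : ℝ) (hq : q ≠ 1) (k : ℕ) (a : ℝ) :
    (∑ i ∈ Finset.range (k + 1), (q / (1 - q)) ^ i * finDiff i k a) -
      q * ∑ i ∈ Finset.range (k + 1), (q / (1 - q)) ^ i * finDiff i k (a + 1) =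
      (1 - q) * a ^ k := by
  have h1 : (1 : ℝ) - q ≠ 0 := sub_ne_zero.mpr (Ne.symm hq)
  have hstep : ∀ i ∈ Finset.range (k + 1),
      (q / (1 - q)) ^ i * finDiff i k a - q * ((q / (1 - q)) ^ i * finDiff i k (a + 1))
        = (1 - q) * ((q / (1 - q)) ^ i * finDiff i k a)
          - (1 - q) * ((q / (1 - q)) ^ (i + 1) * finDiff (i + 1) k a) := by
    intro i _
    have hr : (1 - q) * (q / (1 - q)) ^ (i + 1) = q * (q / (1 - q)) ^ i := by
      rw [pow_succ]; field_simp
    rw [finDiff_shift]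
    linear_combination (finDiff (i + 1) k a) * hr
  calc (∑ i ∈ Finset.range (k + 1), (q / (1 - q)) ^ i * finDiff i k a) -
      q * ∑ i ∈ Finset.range (k + 1), (q / (1 - q)) ^ i * finDiff i k (a + 1)
      = ∑ i ∈ Finset.range (k + 1),
          ((q / (1 - q)) ^ i * finDiff i k a - q * ((q / (1 - q)) ^ i * finDiff i k (a + 1))) := by
        rw [Finset.sum_sub_distrib, Finset.mul_sum]
    _ = ∑ i ∈ Finset.range (k + 1),
          ((1 - q) * ((q / (1 - q)) ^ i * finDiff i k a)
            - (1 - q) * ((q / (1 - q)) ^ (i + 1) * finDiff (i + 1) k a)) :=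
        Finset.sum_congr rfl hstep
    _ = (1 - q) * ((q / (1 - q)) ^ 0 * finDiff 0 k a)
          - (1 - q) * ((q / (1 - q)) ^ (k + 1) * finDiff (k + 1) k a) :=
        Finset.sum_range_sub' _ _
    _ = (1 - q) * a ^ k := by
        rw [finDiff_top]
        simp [finDiff]

/-- For every real `q ≠ 1`, every natural `k` and every natural `n ≥ 1`,
`∑_{γ=0}^{n-1} q^γ γ^k = (1/(1-q)) ∑_{i=0}^{k} (q/(1-q))^i Δ^i 0^k
  - (q^n/(1-q)) ∑_{i=0}^{k} (q/(1-q))^i Δ^i n^k`. -/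
theorem sum_geom_mul_pow_eq (q : ℝ) (hq : q ≠ 1) (k n : ℕ) (hn : 1 ≤ n) :
    ∑ γ ∈ Finset.range n, q ^ γ * (γ : ℝ) ^ k =
      (1 / (1 - q)) * ∑ i ∈ Finset.range (k + 1), (q / (1 - q)) ^ i * finDiff i k 0 -
      (q ^ n / (1 - q)) * ∑ i ∈ Finset.range (k + 1), (q / (1 - q)) ^ i * finDiff i k n := by
  have h1 : (1 : ℝ) - q ≠ 0 := sub_ne_zero.mpr (Ne.symm hq)
  have := Finset.sum_range_sub'
    (fun γ => (q ^ γ / (1 - q)) * ∑ i ∈ Finset.range (k + 1), (q / (1 - q)) ^ i * finDiff i k γ) n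
  simp only [pow_zero, Nat.cast_zero] at this
  rw [← this]
  refine Finset.sum_congr rfl fun γ _ => ?_
  push_cast
  set S1 := ∑ i ∈ Finset.range (k + 1), (q / (1 - q)) ^ i * finDiff i k (γ : ℝ) with hS1
  set S2 := ∑ i ∈ Finset.range (k + 1), (q / (1 - q)) ^ i * finDiff i k ((γ : ℝ) + 1) with hS2
  have hk := key q hq k γ
  rw [← hS1, ← hS2] at hk
  field_simp
  linear_combination (-q ^ γ) * hk
end

section
/- For every real number q with |q| < 1 and every natural number k, the series Σ_{γ=0}^{∞} q^γ γ^k converges and Σ_{γ=0}^{∞} q^γ γ^k = (1/(1−q)) · Σ_{i=0}^{k} (q/(1−q))^i Δ^i 0^k. -/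
open Finset Nat Function fwdDiff

lemma finDiff_eq_fwdDiff (i k : ℕ) :
    finDiff i k 0 = (fwdDiff (1 : ℕ))^[i] (fun x : ℕ => (x : ℝ) ^ k) 0 := by
  rw [fwdDiff_iter_eq_sum_shift, finDiff]
  refine Finset.sum_congr rfl fun j hj => ?_
  simp [zsmul_eq_mul, mul_comm]

lemma fwdDiff_iter_pow_eq_zero : ∀ (k i : ℕ), k < i →
    (fwdDiff (1 : ℕ))^[i] (fun x : ℕ => (x : ℝ) ^ k) = 0 := by
  intro k
  induction k using Nat.strong_induction_on with
  | _ k IH =>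
    intro i hi
    obtain ⟨i, rfl⟩ : ∃ j, i = j + 1 := ⟨i - 1, by omega⟩
    rw [Function.iterate_succ_apply]
    have hΔ : fwdDiff (1 : ℕ) (fun x : ℕ => (x : ℝ) ^ k)
        = ∑ m ∈ Finset.range k, fun x : ℕ => (k.choose m : ℝ) * (x : ℝ) ^ m := by
      ext x
      simp only [fwdDiff, Finset.sum_apply]
      have : ((x + 1 : ℕ) : ℝ) ^ k = ((x : ℝ) + 1) ^ k := by push_cast; ring
      rw [this, add_pow]
      rw [Finset.sum_range_succ]
      simp [mul_comm]
    rw [hΔ, fwdDiff_iter_finset_sum]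
    refine Finset.sum_eq_zero fun m hm => ?_
    have hm' : m < k := Finset.mem_range.mp hm
    have : (fun x : ℕ => (k.choose m : ℝ) * (x : ℝ) ^ m)
        = (k.choose m : ℝ) • fun x : ℕ => (x : ℝ) ^ m := by
      ext x; simp [smul_eq_mul]
    rw [this, fwdDiff_iter_const_smul, IH m hm' i (by omega)]
    simp

/-- Newton expansion: `n^k = ∑_{i=0}^{k} C(n,i) Δ^i 0^k`. -/
lemma newton_expansion (n k : ℕ) :
    (n : ℝ) ^ k = ∑ i ∈ Finset.range (k + 1), (n.choose i : ℝ) * finDiff i k 0 := by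
  have key := shift_eq_sum_fwdDiff_iter (1 : ℕ) (fun x : ℕ => (x : ℝ) ^ k) n 0
  simp only [zero_add, smul_eq_mul, nsmul_eq_mul, mul_one] at key
  have key' : (n : ℝ) ^ k = ∑ i ∈ Finset.range (n + 1), (n.choose i : ℝ) * finDiff i k 0 := by
    rw [key]
    exact Finset.sum_congr rfl fun i _ => by rw [finDiff_eq_fwdDiff]
  have hN : ∀ N, n + 1 ≤ N → k + 1 ≤ N →
      (n : ℝ) ^ k = ∑ i ∈ Finset.range N, (n.choose i : ℝ) * finDiff i k 0 := by
    intro N hn hk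
    rw [key']
    apply Finset.sum_subset (Finset.range_subset_range.mpr hn)
    intro i _ hi
    rw [Nat.choose_eq_zero_of_lt (by simpa using hi)]
    simp
  rw [hN (max (n+1) (k+1)) (le_max_left _ _) (le_max_right _ _)]
  symm
  apply Finset.sum_subset (Finset.range_subset_range.mpr (le_max_right _ _))
  intro i _ hi
  rw [finDiff_eq_fwdDiff, fwdDiff_iter_pow_eq_zero k i (by simpa using hi)]
  simp

lemma hasSum_choose_geom (q : ℝ) (hq : |q| < 1) (i : ℕ) :
    HasSum (fun γ : ℕ => (γ.choose i : ℝ) * q ^ γ) (q ^ i / (1 - q) ^ (i + 1)) := by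
  have hq' : ‖q‖ < 1 := by rwa [Real.norm_eq_abs]
  have h1 := (hasSum_choose_mul_geometric_of_norm_lt_one i hq').mul_left (q ^ i)
  set f : ℕ → ℝ := fun γ => (γ.choose i : ℝ) * q ^ γ with hf
  have h2 : HasSum (fun n : ℕ => f (n + i)) (q ^ i / (1 - q) ^ (i + 1)) := by
    have e1 : (fun n : ℕ => f (n + i)) = fun n : ℕ => q ^ i * (((n + i).choose i : ℝ) * q ^ n) := by
      ext n; simp only [hf, pow_add]; ring
    have e2 : q ^ i / (1 - q) ^ (i + 1) = q ^ i * (1 / (1 - q) ^ (i + 1)) := by ring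
    rw [e1, e2]; exact h1
  have h3 := (hasSum_nat_add_iff (f := f) i).mp h2
  have hz : ∑ γ ∈ Finset.range i, f γ = 0 :=
    Finset.sum_eq_zero fun γ hγ => by
      simp [hf, Nat.choose_eq_zero_of_lt (Finset.mem_range.mp hγ)]
  rwa [hz, add_zero] at h3

/-- For every real `q` with `|q| < 1` and every natural `k`, the series
`∑_{γ=0}^{∞} q^γ γ^k` converges and equals
`(1/(1-q)) ∑_{i=0}^{k} (q/(1-q))^i Δ^i 0^k`. -/
theorem hasSum_geom_mul_pow (q : ℝ) (hq : |q| < 1) (k : ℕ) :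
    HasSum (fun γ : ℕ => q ^ γ * (γ : ℝ) ^ k)
      ((1 / (1 - q)) * ∑ i ∈ Finset.range (k + 1), (q / (1 - q)) ^ i * finDiff i k 0) := by
  have h1q : (1 : ℝ) - q ≠ 0 := by
    intro h
    have : q = 1 := by linarith
    rw [this] at hq; norm_num at hq
  have hterm : ∀ i ∈ Finset.range (k + 1),
      HasSum (fun γ : ℕ => finDiff i k 0 * ((γ.choose i : ℝ) * q ^ γ))
        (finDiff i k 0 * (q ^ i / (1 - q) ^ (i + 1))) :=
    fun i _ => (hasSum_choose_geom q hq i).mul_left _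
  have H := hasSum_sum hterm
  convert H using 1
  · ext γ
    rw [newton_expansion γ k, Finset.mul_sum]
    exact Finset.sum_congr rfl fun i _ => by ring
  · rw [Finset.mul_sum]
    refine Finset.sum_congr rfl fun i _ => ?_
    rw [div_pow, pow_succ]
    field_simp
end

section
/- For every integer β, the series Σ_{γ∈ℤ} D_2(γ) e^{h(β−γ)} converges absolutely and equals 0; i.e., the discrete convolution of D_2 with the discrete function β ↦ e^{hβ} is identically zero. -/
/-- The polynomial `P_2(λ) = (1-e^{2h})(1-λ)² - 2h(λ(e^{2h}+1) - e^h(λ²+1))`. -/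
noncomputable def P2 (h x : ℝ) : ℝ :=
  (1 - Real.exp (2 * h)) * (1 - x) ^ 2 -
    2 * h * (x * (Real.exp (2 * h) + 1) - Real.exp h * (x ^ 2 + 1))

set_option maxHeartbeats 1000000 in
/-- For every integer `β`, the series `∑_{γ ∈ ℤ} D_2(γ) e^{h(β-γ)}` converges and
equals `0`: the discrete convolution of `D_2` with `β ↦ e^{hβ}` is identically zero. -/
theorem D2_conv_exp (h p p1 lam A C : ℝ) (D2 : ℤ → ℝ)
    (hh : 0 < h)
    (hp : p = (1 - Real.exp (2 * h)) + 2 * h * Real.exp h)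
    (hp1 : p1 = -2 * (1 - Real.exp (2 * h)) - 2 * h * (Real.exp (2 * h) + 1))
    (hpne : p ≠ 0)
    (hroot : P2 h lam = 0)
    (hlam0 : 0 < |lam|) (hlam1 : |lam| < Real.exp (-h))
    (hder : deriv (P2 h) lam ≠ 0)
    (hA : A = 2 * (1 - lam) ^ 2 *
        (lam * (Real.exp (2 * h) + 1) - Real.exp h * (lam ^ 2 + 1)) * p
        / (lam * deriv (P2 h) lam))
    (hC : C = 1 + 2 * Real.exp h + Real.exp (2 * h) + Real.exp h * p1 / p)
    (hD : ∀ β : ℤ, D2 β =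
      if β = 0 then (2 * C + A / lam) / p
      else if β.natAbs = 1 then (-2 * Real.exp h + A) / p
      else A * lam ^ (β.natAbs - 1) / p)
    (β : ℤ) :
    HasSum (fun γ : ℤ => D2 γ * Real.exp (h * ((β : ℝ) - (γ : ℝ)))) 0 := by
  set E : ℝ := Real.exp h with hEdef
  have hEpos : 0 < E := Real.exp_pos h
  have hEne : E ≠ 0 := ne_of_gt hEpos
  have hE1 : 1 < E := by
    rw [hEdef]
    exact Real.one_lt_exp_iff.mpr hh
  have hE2 : Real.exp (2 * h) = E ^ 2 := by
    rw [two_mul, Real.exp_add, hEdef]; ring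
  have hlamne : lam ≠ 0 := abs_pos.mp hlam0
  have hlaminv : |lam| < E⁻¹ := by rw [hEdef, ← Real.exp_neg]; exact hlam1
  have hEi1 : E⁻¹ < 1 := by
    rw [inv_lt_one_iff₀]; right; exact hE1
  have habs1 : |lam * E| < 1 := by
    rw [abs_mul, abs_of_pos hEpos]
    have := mul_lt_mul_of_pos_right hlaminv hEpos
    rwa [inv_mul_cancel₀ hEne] at this
  have habs2 : |lam * E⁻¹| < 1 := by
    rw [abs_mul, abs_of_pos (inv_pos.2 hEpos)]
    nlinarith [abs_nonneg lam, inv_pos.2 hEpos]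
  have h1mE : (1 : ℝ) - lam * E ≠ 0 := by
    have := lt_of_le_of_lt (le_abs_self _) habs1
    exact ne_of_gt (by linarith)
  have h1mEi : (1 : ℝ) - lam * E⁻¹ ≠ 0 := by
    have := lt_of_le_of_lt (le_abs_self _) habs2
    exact ne_of_gt (by linarith)
  have hElam : E - lam ≠ 0 := by
    have h1 : lam ≤ |lam| := le_abs_self lam
    exact ne_of_gt (by nlinarith)
  -- derivative of P2
  have hPfun : P2 h = fun x => p * x ^ 2 + p1 * x + p := by
    funext x
    simp only [P2, hp, hp1]
    ring
  have hd : deriv (P2 h) lam = 2 * p * lam + p1 := by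
    have h1 : HasDerivAt (fun x : ℝ => x ^ 2) (2 * lam) lam := by
      simpa using hasDerivAt_pow 2 lam
    have h2 : HasDerivAt (fun x : ℝ => x) 1 lam := hasDerivAt_id lam
    have h3 : HasDerivAt (fun x : ℝ => p * x ^ 2 + p1 * x + p)
        (p * (2 * lam) + p1 * 1) lam := ((h1.const_mul p).add (h2.const_mul p1)).add_const p
    rw [hPfun, h3.deriv]; ring
  have hq : p * lam ^ 2 + p1 * lam + p = 0 := by
    rw [hPfun] at hroot; simpa using hroot
  have hdne : 2 * p * lam + p1 ≠ 0 := hd ▸ hder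
  have hA' : A * (lam * (2 * p * lam + p1)) =
      2 * (1 - lam) ^ 2 * (lam * (Real.exp (2 * h) + 1) - E * (lam ^ 2 + 1)) * p := by
    rw [hA, hd]
    exact div_mul_cancel₀ _ (mul_ne_zero hlamne hdne)
  have h7 : 2 * (1 - lam) ^ 2 * (1 - lam ^ 2) * p ^ 2 =
      (4 * p + 2 * p1) * lam ^ 2 * (2 * p * lam + p1) := by
    linear_combination (-2 * p * lam ^ 2 - (4 * p + 2 * p1) * lam + 2 * p) * hq
  have key : A * p * (1 - lam ^ 2) =
      (4 * p + 2 * p1) * (lam * (lam * (E ^ 2 + 1) - E * (lam ^ 2 + 1))) := by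
    have key2 : A * p * (1 - lam ^ 2) * (lam * (2 * p * lam + p1)) =
        (4 * p + 2 * p1) * (lam * (lam * (E ^ 2 + 1) - E * (lam ^ 2 + 1))) *
          (lam * (2 * p * lam + p1)) := by
      rw [← hE2]
      linear_combination (p * (1 - lam ^ 2)) * hA' +
        (lam * (Real.exp (2 * h) + 1) - E * (lam ^ 2 + 1)) * h7
    exact mul_right_cancel₀ (mul_ne_zero hlamne hdne) key2
  have hV : A / (lam * (E - lam)) + A / (1 - lam * E) + (4 + 2 * p1 / p) = 0 := by
    field_simp
    linear_combination key
  -- the two geometric half-series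
  have HP : HasSum (fun n : ℕ => D2 (n : ℤ) * Real.exp (h * ((β : ℝ) - ((n : ℤ) : ℝ))))
      ((-2 * E + A) / p * (Real.exp (h * (β : ℝ)) / E)
        - A * Real.exp (h * (β : ℝ)) / (p * lam) * (lam * E⁻¹)
        + ((2 * C + A / lam) / p * Real.exp (h * (β : ℝ))
          - A * Real.exp (h * (β : ℝ)) / (p * lam)
          + A * Real.exp (h * (β : ℝ)) / (p * lam) * (1 - lam * E⁻¹)⁻¹)) := by
    have G1 : HasSum (fun n : ℕ => A * Real.exp (h * (β : ℝ)) / (p * lam) * (lam * E⁻¹) ^ n)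
        (A * Real.exp (h * (β : ℝ)) / (p * lam) * (1 - lam * E⁻¹)⁻¹) :=
      (hasSum_geometric_of_abs_lt_one habs2).mul_left _
    have G2 := G1.update 0 ((2 * C + A / lam) / p * Real.exp (h * (β : ℝ)))
    have G3 := G2.update 1 ((-2 * E + A) / p * (Real.exp (h * (β : ℝ)) / E))
    have hfun : (fun n : ℕ => D2 (n : ℤ) * Real.exp (h * ((β : ℝ) - ((n : ℤ) : ℝ)))) =
        Function.update (Function.update
          (fun n : ℕ => A * Real.exp (h * (β : ℝ)) / (p * lam) * (lam * E⁻¹) ^ n) 0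
          ((2 * C + A / lam) / p * Real.exp (h * (β : ℝ)))) 1
          ((-2 * E + A) / p * (Real.exp (h * (β : ℝ)) / E)) := by
      funext n
      match n with
      | 0 =>
        rw [Function.update_of_ne (by norm_num), Function.update_self, hD]
        rw [if_pos (by omega : (((0:ℕ) : ℤ)) = 0)]
        rw [show h * ((β : ℝ) - ((((0:ℕ) : ℤ)) : ℝ)) = h * (β : ℝ) by push_cast; ring]
      | 1 =>
        rw [Function.update_self, hD]
        rw [if_neg (by omega : ¬(((1:ℕ) : ℤ)) = 0),
          if_pos (by omega : ((((1:ℕ) : ℤ))).natAbs = 1)]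
        rw [show h * ((β : ℝ) - ((((1:ℕ) : ℤ)) : ℝ)) = h * (β : ℝ) - h by push_cast; ring,
          Real.exp_sub, ← hEdef]
      | (n + 2) =>
        rw [Function.update_of_ne (by omega), Function.update_of_ne (by omega), hD]
        have h1 : ¬((((n + 2 : ℕ) : ℤ)) = 0) := by omega
        have h2 : ¬((((n + 2 : ℕ) : ℤ)).natAbs = 1) := by omega
        rw [if_neg h1, if_neg h2]
        have h3 : (((n + 2 : ℕ) : ℤ)).natAbs - 1 = n + 1 := by omega
        rw [h3, show h * ((β : ℝ) - ((((n + 2 : ℕ) : ℤ)) : ℝ))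
            = h * (β : ℝ) - ((n + 2 : ℕ) : ℝ) * h by push_cast; ring,
          Real.exp_sub, Real.exp_nat_mul, ← hEdef]
        rw [mul_pow, inv_pow]
        have hEp : (E : ℝ) ^ (n + 2) ≠ 0 := pow_ne_zero _ hEne
        field_simp
        ring
    rw [hfun]
    convert G3 using 1
    · rfl
    simp [Function.update_apply]
  have HN : HasSum (fun n : ℕ => D2 (-((n : ℤ) + 1)) *
        Real.exp (h * ((β : ℝ) - ((-((n : ℤ) + 1) : ℤ) : ℝ))))
      ((-2 * E + A) / p * (Real.exp (h * (β : ℝ)) * E)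
        - A * Real.exp (h * (β : ℝ)) * E / p
        + A * Real.exp (h * (β : ℝ)) * E / p * (1 - lam * E)⁻¹) := by
    have G1 : HasSum (fun n : ℕ => A * Real.exp (h * (β : ℝ)) * E / p * (lam * E) ^ n)
        (A * Real.exp (h * (β : ℝ)) * E / p * (1 - lam * E)⁻¹) :=
      (hasSum_geometric_of_abs_lt_one habs1).mul_left _
    have G2 := G1.update 0 ((-2 * E + A) / p * (Real.exp (h * (β : ℝ)) * E))
    have hfun : (fun n : ℕ => D2 (-((n : ℤ) + 1)) *
          Real.exp (h * ((β : ℝ) - ((-((n : ℤ) + 1) : ℤ) : ℝ)))) =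
        Function.update (fun n : ℕ => A * Real.exp (h * (β : ℝ)) * E / p * (lam * E) ^ n) 0
          ((-2 * E + A) / p * (Real.exp (h * (β : ℝ)) * E)) := by
      funext n
      match n with
      | 0 =>
        rw [Function.update_self, hD]
        rw [if_neg (by omega : ¬(-(((0:ℕ) : ℤ) + 1) : ℤ) = 0),
          if_pos (by omega : (-(((0:ℕ) : ℤ) + 1) : ℤ).natAbs = 1)]
        rw [show h * ((β : ℝ) - ((-(((0:ℕ) : ℤ) + 1) : ℤ) : ℝ)) = h * (β : ℝ) + h by
            push_cast; ring, Real.exp_add, ← hEdef]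
      | (n + 1) =>
        rw [Function.update_of_ne (by omega), hD]
        have h1 : ¬((-(((n + 1 : ℕ) : ℤ) + 1) : ℤ) = 0) := by omega
        have h2 : ¬((-(((n + 1 : ℕ) : ℤ) + 1) : ℤ).natAbs = 1) := by omega
        rw [if_neg h1, if_neg h2]
        have h3 : (-(((n + 1 : ℕ) : ℤ) + 1) : ℤ).natAbs - 1 = n + 1 := by omega
        rw [h3, show h * ((β : ℝ) - ((-(((n + 1 : ℕ) : ℤ) + 1) : ℤ) : ℝ))
            = h * (β : ℝ) + ((n + 2 : ℕ) : ℝ) * h by push_cast; ring,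
          Real.exp_add, Real.exp_nat_mul, ← hEdef]
        rw [mul_pow]
        have hEp : (E : ℝ) ^ (n + 2) ≠ 0 := pow_ne_zero _ hEne
        field_simp
        ring
    rw [hfun]
    simpa using G2
  have hval : ((-2 * E + A) / p * (Real.exp (h * (β : ℝ)) / E)
        - A * Real.exp (h * (β : ℝ)) / (p * lam) * (lam * E⁻¹)
        + ((2 * C + A / lam) / p * Real.exp (h * (β : ℝ))
          - A * Real.exp (h * (β : ℝ)) / (p * lam)
          + A * Real.exp (h * (β : ℝ)) / (p * lam) * (1 - lam * E⁻¹)⁻¹))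
      + ((-2 * E + A) / p * (Real.exp (h * (β : ℝ)) * E)
        - A * Real.exp (h * (β : ℝ)) * E / p
        + A * Real.exp (h * (β : ℝ)) * E / p * (1 - lam * E)⁻¹) = 0 := by
    have hbig : ((-2 * E + A) / p * (Real.exp (h * (β : ℝ)) / E)
        - A * Real.exp (h * (β : ℝ)) / (p * lam) * (lam * E⁻¹)
        + ((2 * C + A / lam) / p * Real.exp (h * (β : ℝ))
          - A * Real.exp (h * (β : ℝ)) / (p * lam)
          + A * Real.exp (h * (β : ℝ)) / (p * lam) * (1 - lam * E⁻¹)⁻¹))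
      + ((-2 * E + A) / p * (Real.exp (h * (β : ℝ)) * E)
        - A * Real.exp (h * (β : ℝ)) * E / p
        + A * Real.exp (h * (β : ℝ)) * E / p * (1 - lam * E)⁻¹)
      = Real.exp (h * (β : ℝ)) * E / p *
          (A / (lam * (E - lam)) + A / (1 - lam * E) + (4 + 2 * p1 / p)) := by
      rw [hC, hE2]
      field_simp
      ring
    rw [hbig, hV, mul_zero]
  rw [← hval]
  exact HasSum.of_nat_of_neg_add_one HP HN
end

section
/- For every integer β, the series Σ_{γ∈ℤ} D_2(γ) e^{−h(β−γ)} converges absolutely and equals 0; i.e., the discrete convolution of D_2 with the discrete function β ↦ e^{−hβ} is identically zero. -/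
set_option maxHeartbeats 3200000 in
/-- For every integer `β`, the series `∑_{γ ∈ ℤ} D_2(γ) e^{-h(β-γ)}` converges and
equals `0`: the discrete convolution of `D_2` with `β ↦ e^{-hβ}` is identically zero. -/
theorem D2_conv_exp_neg (h p p1 lam A C : ℝ) (D2 : ℤ → ℝ)
    (hh : 0 < h)
    (hp : p = (1 - Real.exp (2 * h)) + 2 * h * Real.exp h)
    (hp1 : p1 = -2 * (1 - Real.exp (2 * h)) - 2 * h * (Real.exp (2 * h) + 1))
    (hpne : p ≠ 0)
    (hroot : P2 h lam = 0)
    (hlam0 : 0 < |lam|) (hlam1 : |lam| < Real.exp (-h))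
    (hder : deriv (P2 h) lam ≠ 0)
    (hA : A = 2 * (1 - lam) ^ 2 *
        (lam * (Real.exp (2 * h) + 1) - Real.exp h * (lam ^ 2 + 1)) * p
        / (lam * deriv (P2 h) lam))
    (hC : C = 1 + 2 * Real.exp h + Real.exp (2 * h) + Real.exp h * p1 / p)
    (hD : ∀ β : ℤ, D2 β =
      if β = 0 then (2 * C + A / lam) / p
      else if β.natAbs = 1 then (-2 * Real.exp h + A) / p
      else A * lam ^ (β.natAbs - 1) / p)
    (β : ℤ) :
    HasSum (fun γ : ℤ => D2 γ * Real.exp (-(h * ((β : ℝ) - (γ : ℝ))))) 0 := by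
  have hE2' : Real.exp (2 * h) = Real.exp h ^ 2 := by
    rw [show (2:ℝ) * h = ((2:ℕ):ℝ) * h by norm_num, Real.exp_nat_mul]
  obtain ⟨E, hEdef⟩ : ∃ E, Real.exp h = E := ⟨_, rfl⟩
  rw [hE2', hEdef] at hp hp1 hA hC
  simp only [hE2', hEdef] at hD
  have hEpos : (0:ℝ) < E := hEdef ▸ Real.exp_pos h
  have hEne : E ≠ 0 := ne_of_gt hEpos
  have hE1 : (1:ℝ) < E := by
    rw [← hEdef, show (1:ℝ) = Real.exp 0 by simp]
    exact Real.exp_lt_exp.mpr hh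
  have hlamne : lam ≠ 0 := by
    intro h0; rw [h0] at hlam0; simp at hlam0
  have hlam1' : |lam| < 1 := by
    refine hlam1.trans ?_
    rw [show (1:ℝ) = Real.exp 0 by simp]
    exact Real.exp_lt_exp.mpr (by linarith)
  have hr : |lam * E| < 1 := by
    rw [abs_mul, abs_of_pos hEpos]
    calc |lam| * E < Real.exp (-h) * E := mul_lt_mul_of_pos_right hlam1 hEpos
      _ = 1 := by rw [← hEdef, ← Real.exp_add]; simp
  have hr' : |lam / E| < 1 := by
    rw [abs_div, abs_of_pos hEpos, div_lt_one hEpos]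
    exact hlam1'.trans hE1
  have h1r : 1 - lam * E ≠ 0 := by
    intro hq
    have : lam * E = 1 := by linarith
    rw [this] at hr; simp at hr
  have h1r' : 1 - lam / E ≠ 0 := by
    intro hq
    have : lam / E = 1 := by linarith
    rw [this] at hr'; simp at hr'
  have hElam : E - lam ≠ 0 := by
    have h1 : lam < E := lt_of_le_of_lt (le_abs_self lam) (hlam1'.trans hE1)
    intro hq; nlinarith
  -- P2 as an explicit quadratic
  have hfun : P2 h = fun x : ℝ => p * x ^ 2 + p1 * x + p := by
    funext x
    simp only [P2]
    rw [hE2', hEdef, hp, hp1]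
    ring
  have hroot' : p * lam ^ 2 + p1 * lam + p = 0 := by
    have := hroot; rw [hfun] at this; simpa using this
  have hderiv : deriv (P2 h) lam = 2 * p * lam + p1 := by
    have H : HasDerivAt (P2 h) (2 * p * lam + p1) lam := by
      rw [hfun]
      have h1 : HasDerivAt (fun x : ℝ => x ^ 2) (2 * lam) lam := by
        simpa using hasDerivAt_pow 2 lam
      have h2 : HasDerivAt (fun x : ℝ => p * x ^ 2 + p1 * x + p)
          (p * (2 * lam) + p1 * 1) lam :=
        ((h1.const_mul p).add ((hasDerivAt_id' (𝕜 := ℝ) (x := lam)).const_mul p1)).add_const p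
      convert h2 using 1
      ring
    exact H.deriv
  rw [hderiv] at hA
  have hdne : 2 * p * lam + p1 ≠ 0 := hderiv ▸ hder
  -- abbreviations
  set e0 : ℝ := Real.exp (-(h * (β:ℝ))) with he0
  have hexp_pos : ∀ n : ℕ, Real.exp (-(h * ((β:ℝ) - ((n:ℤ):ℝ)))) = e0 * E ^ n := by
    intro n
    rw [show -(h * ((β:ℝ) - ((n:ℤ):ℝ))) = -(h * (β:ℝ)) + (n:ℝ) * h by push_cast; ring,
      Real.exp_add, Real.exp_nat_mul, hEdef, he0]
  have hexp_neg : ∀ n : ℕ,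
      Real.exp (-(h * ((β:ℝ) - (((-(n + 1) : ℤ)):ℝ)))) = e0 / E ^ (n + 1) := by
    intro n
    rw [show -(h * ((β:ℝ) - (((-(n + 1) : ℤ)):ℝ)))
        = -(h * (β:ℝ)) - ((n + 1 : ℕ):ℝ) * h by push_cast; ring,
      Real.exp_sub, Real.exp_nat_mul, hEdef, he0]
  -- D2 values
  have hD0 : D2 0 = (2 * C + A / lam) / p := by rw [hD]; simp
  have hD1 : D2 1 = (-2 * E + A) / p := by rw [hD]; norm_num
  have hDneg1 : D2 (-1) = (-2 * E + A) / p := by rw [hD]; norm_num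
  have hDpos : ∀ n : ℕ, 2 ≤ n → D2 (n:ℤ) = A * lam ^ (n - 1) / p := by
    intro n hn
    rw [hD]
    rw [if_neg (by exact_mod_cast (by omega : n ≠ 0)),
      if_neg (by rw [Int.natAbs_natCast]; omega)]
    rw [Int.natAbs_natCast]
  have hDneg : ∀ n : ℕ, 1 ≤ n → D2 (-(n + 1)) = A * lam ^ n / p := by
    intro n hn
    rw [hD]
    have hna : ((-(n + 1) : ℤ)).natAbs = n + 1 := by
      rw [Int.natAbs_neg]
      exact_mod_cast Int.natAbs_natCast (n + 1)
    rw [if_neg (by omega), if_neg (by rw [hna]; omega), hna]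
    simp
  set c : ℝ := A * e0 / (p * lam) with hc
  set c' : ℝ := A * e0 / (p * E) with hc'
  -- positive part
  have hpos : HasSum (fun n : ℕ => D2 (n:ℤ) * Real.exp (-(h * ((β:ℝ) - ((n:ℤ):ℝ)))))
      (c * (1 - lam * E)⁻¹ +
        ((D2 0 * e0 - c) + (D2 1 * (e0 * E) - c * (lam * E)))) := by
    have hfeq : (fun n : ℕ => D2 (n:ℤ) * Real.exp (-(h * ((β:ℝ) - ((n:ℤ):ℝ)))))
        = fun n : ℕ => D2 (n:ℤ) * (e0 * E ^ n) := by
      funext n; rw [hexp_pos n]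
    rw [hfeq]
    have hgeo : HasSum (fun n : ℕ => c * (lam * E) ^ n) (c * (1 - lam * E)⁻¹) :=
      (hasSum_geometric_of_abs_lt_one hr).mul_left c
    have hzero : ∀ n ∉ ({0, 1} : Finset ℕ),
        D2 (n:ℤ) * (e0 * E ^ n) - c * (lam * E) ^ n = 0 := by
      intro n hn
      have hn2 : 2 ≤ n := by simp at hn; omega
      rw [hDpos n hn2, hc]
      have hl : lam ^ (n - 1) * lam = lam ^ n := by
        rw [← pow_succ]; congr 1; omega
      field_simp
      rw [mul_pow]
      linear_combination (A * e0 * E ^ n) * hl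
    have hcor : HasSum (fun n : ℕ => D2 (n:ℤ) * (e0 * E ^ n) - c * (lam * E) ^ n)
        ((D2 0 * e0 - c) + (D2 1 * (e0 * E) - c * (lam * E))) := by
      have hs := hasSum_sum_of_ne_finset_zero (f := fun n : ℕ => D2 (n:ℤ) * (e0 * E ^ n) - c * (lam * E) ^ n) (s := ({0, 1} : Finset ℕ)) (L := SummationFilter.unconditional ℕ) hzero
      convert hs using 1
      rw [Finset.sum_pair (by norm_num : (0:ℕ) ≠ 1)]
      push_cast
      ring
    have := hgeo.add hcor
    have heq : (fun n : ℕ => c * (lam * E) ^ n +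
        (D2 (n:ℤ) * (e0 * E ^ n) - c * (lam * E) ^ n))
        = fun n : ℕ => D2 (n:ℤ) * (e0 * E ^ n) := by
      funext n; ring
    rwa [heq] at this
  -- negative part
  have hneg : HasSum (fun n : ℕ => D2 (-(n + 1)) * Real.exp (-(h * ((β:ℝ) - (((-(n + 1) : ℤ)):ℝ)))))
      (c' * (1 - lam / E)⁻¹ + (D2 (-1) * (e0 / E) - c')) := by
    have hfeq : (fun n : ℕ => D2 (-(n + 1)) * Real.exp (-(h * ((β:ℝ) - (((-(n + 1) : ℤ)):ℝ)))))
        = fun n : ℕ => D2 (-(n + 1)) * (e0 / E ^ (n + 1)) := by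
      funext n; rw [hexp_neg n]
    rw [hfeq]
    have hgeo' : HasSum (fun n : ℕ => c' * (lam / E) ^ n) (c' * (1 - lam / E)⁻¹) :=
      (hasSum_geometric_of_abs_lt_one hr').mul_left c'
    have hzero' : ∀ n ∉ ({0} : Finset ℕ),
        D2 (-(n + 1)) * (e0 / E ^ (n + 1)) - c' * (lam / E) ^ n = 0 := by
      intro n hn
      have hn1 : 1 ≤ n := by simp at hn; omega
      rw [hDneg n hn1, hc']
      rw [div_pow, pow_succ]
      field_simp
      ring
    have hcor' : HasSum (fun n : ℕ => D2 (-(n + 1)) * (e0 / E ^ (n + 1)) - c' * (lam / E) ^ n)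
        (D2 (-1) * (e0 / E) - c') := by
      have hs := hasSum_sum_of_ne_finset_zero (f := fun n : ℕ => D2 (-(n + 1)) * (e0 / E ^ (n + 1)) - c' * (lam / E) ^ n) (s := ({0} : Finset ℕ)) (L := SummationFilter.unconditional ℕ) hzero'
      convert hs using 1
      rw [Finset.sum_singleton]
      push_cast
      norm_num
    have := hgeo'.add hcor'
    have heq : (fun n : ℕ => c' * (lam / E) ^ n +
        (D2 (-(n + 1)) * (e0 / E ^ (n + 1)) - c' * (lam / E) ^ n))
        = fun n : ℕ => D2 (-(n + 1)) * (e0 / E ^ (n + 1)) := by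
      funext n; ring
    rwa [heq] at this
  -- combine
  have htot := HasSum.of_nat_of_neg_add_one
      (f := fun γ : ℤ => D2 γ * Real.exp (-(h * ((β : ℝ) - (γ : ℝ))))) hpos hneg
  -- algebra: the total is zero
  have hnum : p ^ 2 * (1 - lam) ^ 3 * (1 + lam) = (2 * p + p1) * lam ^ 2 * (2 * p * lam + p1) := by
    linear_combination (p - p * lam ^ 2 - (2 * p + p1) * lam) * hroot'
  have hT1 : A / (lam * (1 - lam * E)) + A / (E - lam)
      = -2 * E * p * (1 - lam) ^ 3 * (1 + lam) / (lam ^ 2 * (2 * p * lam + p1)) := by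
    rw [hA]
    field_simp
    ring
  have hT2 : 2 * C - 2 * E ^ 2 - 2 = 2 * E * (2 * p + p1) / p := by
    rw [hC]; field_simp; ring
  have hT3 : -2 * E * p * (1 - lam) ^ 3 * (1 + lam) / (lam ^ 2 * (2 * p * lam + p1))
      + 2 * E * (2 * p + p1) / p = 0 := by
    have hd2 : lam ^ 2 * (2 * p * lam + p1) ≠ 0 := mul_ne_zero (pow_ne_zero 2 hlamne) hdne
    field_simp
    linear_combination (2 * E) * hnum + (4 * E * (p * lam ^ 2 + (p1 + 2 * p) * lam - p)) * hroot'
  have hT : A / (lam * (1 - lam * E)) + A / (E - lam) + (2 * C - 2 * E ^ 2 - 2) = 0 := by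
    rw [hT1, hT2]
    exact hT3
  have hval : c * (1 - lam * E)⁻¹ +
        ((D2 0 * e0 - c) + (D2 1 * (e0 * E) - c * (lam * E))) +
      (c' * (1 - lam / E)⁻¹ + (D2 (-1) * (e0 / E) - c')) = 0 := by
    have h1 : c * (1 - lam * E)⁻¹ +
        ((D2 0 * e0 - c) + (D2 1 * (e0 * E) - c * (lam * E))) +
        (c' * (1 - lam / E)⁻¹ + (D2 (-1) * (e0 / E) - c'))
        = e0 / p * (A / (lam * (1 - lam * E)) + A / (E - lam) + (2 * C - 2 * E ^ 2 - 2)) := by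
      rw [hD0, hD1, hDneg1, hc, hc']
      field_simp
      ring
    rw [h1, hT, mul_zero]
  rwa [hval] at htot
end

section
/- For every integer β and every natural number n ≤ 1 (i.e. n = 0 or n = 1), the series Σ_{γ∈ℤ} D_2(γ) (h(β−γ))^n converges absolutely and equals 0; consequently the discrete convolution of D_2 with any polynomial of degree at most 2m−3 = 1 sampled at the points hβ is identically zero. -/
/-- For every integer `β` and every natural `n ≤ 1`, the series
`∑_{γ ∈ ℤ} D_2(γ) (h(β-γ))^n` converges and equals `0`: the discrete convolution of
`D_2` with any polynomial of degree at most `2m-3 = 1` sampled at the points `hβ` is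
identically zero. -/
theorem D2_conv_poly (h p p1 lam A C : ℝ) (D2 : ℤ → ℝ)
    (hh : 0 < h)
    (hp : p = (1 - Real.exp (2 * h)) + 2 * h * Real.exp h)
    (hp1 : p1 = -2 * (1 - Real.exp (2 * h)) - 2 * h * (Real.exp (2 * h) + 1))
    (hpne : p ≠ 0)
    (hroot : P2 h lam = 0)
    (hlam0 : 0 < |lam|) (hlam1 : |lam| < Real.exp (-h))
    (hder : deriv (P2 h) lam ≠ 0)
    (hA : A = 2 * (1 - lam) ^ 2 *
        (lam * (Real.exp (2 * h) + 1) - Real.exp h * (lam ^ 2 + 1)) * p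
        / (lam * deriv (P2 h) lam))
    (hC : C = 1 + 2 * Real.exp h + Real.exp (2 * h) + Real.exp h * p1 / p)
    (hD : ∀ β : ℤ, D2 β =
      if β = 0 then (2 * C + A / lam) / p
      else if β.natAbs = 1 then (-2 * Real.exp h + A) / p
      else A * lam ^ (β.natAbs - 1) / p)
    (β : ℤ) (n : ℕ) (hn : n ≤ 1) :
    HasSum (fun γ : ℤ => D2 γ * (h * ((β : ℝ) - (γ : ℝ))) ^ n) 0 := by
  -- basic facts
  set E : ℝ := Real.exp h with hEdef
  have he2 : Real.exp (2 * h) = E ^ 2 := by rw [two_mul, Real.exp_add, sq]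
  have hE1 : 1 < E := by
    rw [hEdef, ← Real.exp_zero]
    exact Real.exp_lt_exp.mpr hh
  have hlt1 : |lam| < 1 := by
    refine hlam1.trans ?_
    rw [← Real.exp_zero]
    exact Real.exp_lt_exp.mpr (by linarith)
  have hlamne : lam ≠ 0 := abs_pos.mp hlam0
  have hlamlt := abs_lt.mp hlt1
  have h1m : (1 : ℝ) - lam ≠ 0 := by
    have : lam < 1 := hlamlt.2
    intro hcon; linarith [sub_eq_zero.mp hcon]
  have h1p : (1 : ℝ) + lam ≠ 0 := by
    have : -1 < lam := hlamlt.1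
    intro hcon; linarith [eq_neg_of_add_eq_zero_right hcon]
  have hhne : h ≠ 0 := ne_of_gt hh
  rw [he2] at hp hp1
  -- P2 is the quadratic p x² + p1 x + p
  have hP2eq : ∀ x : ℝ, P2 h x = p * x ^ 2 + p1 * x + p := by
    intro x
    rw [P2, he2, hp, hp1]
    ring
  have hrt : p * lam ^ 2 + p1 * lam + p = 0 := by rw [← hP2eq]; exact hroot
  -- the derivative
  have hd2 : deriv (P2 h) lam = 2 * p * lam + p1 := by
    have hfun : P2 h = fun x : ℝ => p * x ^ 2 + p1 * x + p := funext hP2eq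
    rw [hfun]
    have hder' : HasDerivAt (fun x : ℝ => p * x ^ 2 + p1 * x + p)
        (2 * p * lam + p1) lam := by
      have h1 := (hasDerivAt_pow 2 lam).const_mul p
      have h2 := (hasDerivAt_id lam).const_mul p1
      have h3 := (h1.add h2).add_const p
      convert h3 using 1
      · rfl
      · rfl
      simp
      ring
    exact hder'.deriv
  have hdd : 2 * p * lam + p1 ≠ 0 := by rw [← hd2]; exact hder
  have hne : lam * (2 * p * lam + p1) ≠ 0 := mul_ne_zero hlamne hdd
  -- key algebraic identities
  have key1 : (1 - lam) ^ 2 * p = 2 * h * lam * (1 - E) ^ 2 := by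
    linear_combination hrt - 2 * lam * hp - lam * hp1
  have hXr : (1 - E ^ 2) * (1 - lam) ^ 2 =
      2 * h * (lam * (E ^ 2 + 1) - E * (lam ^ 2 + 1)) := by
    have h0 := hroot
    rw [P2, he2] at h0
    linarith
  have hA' : A * (lam * (2 * p * lam + p1)) =
      2 * (1 - lam) ^ 2 * (lam * (E ^ 2 + 1) - E * (lam ^ 2 + 1)) * p := by
    rw [hA, hd2, he2]
    exact div_mul_cancel₀ _ hne
  have hld : lam * (2 * p * lam + p1) = p * (lam ^ 2 - 1) := by
    linear_combination hrt
  have hl21 : p * (lam ^ 2 - 1) ≠ 0 := by rw [← hld]; exact hne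
  have hAval : A * (h * (1 + lam)) = -((1 - E ^ 2) * (1 - lam) ^ 3) := by
    have hcan : A * (h * (1 + lam)) * (2 * (p * (lam ^ 2 - 1)))
        = -((1 - E ^ 2) * (1 - lam) ^ 3) * (2 * (p * (lam ^ 2 - 1))) := by
      linear_combination (2 * h * (1 + lam)) * hA'
        - (2 * h * A * (1 + lam)) * hld
        - (2 * (1 + lam) * (1 - lam) ^ 2 * p) * hXr
    exact mul_right_cancel₀ (by simpa using hl21) hcan
  have hCval : C * p = (1 + 2 * E + E ^ 2) * p + E * p1 := by
    rw [hC, he2]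
    field_simp
  have hCv2 : (2 * C - 4 * E) * p = 2 * (1 - E ^ 2) * (1 - E) ^ 2 := by
    linear_combination 2 * hCval + (2 * (1 + E ^ 2)) * hp + (2 * E) * hp1
  -- the total sum value vanishes
  have hN : (2 * C - 4 * E) * (lam * (1 - lam)) + A * (1 + lam) = 0 := by
    have hcan : ((2 * C - 4 * E) * (lam * (1 - lam)) + A * (1 + lam)) * (p * h)
        = 0 * (p * h) := by
      linear_combination (h * lam * (1 - lam)) * hCv2 + p * hAval
        - ((1 - E ^ 2) * (1 - lam)) * key1
    exact mul_right_cancel₀ (mul_ne_zero hpne hhne) hcan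
  have keyid : (2 * C + A / lam) / p + 2 * ((-2 * E + A) / p)
      + 2 * (A * lam / p * (1 - lam)⁻¹) = 0 := by
    have step : (2 * C + A / lam) / p + 2 * ((-2 * E + A) / p)
        + 2 * (A * lam / p * (1 - lam)⁻¹)
        = ((2 * C - 4 * E) * (lam * (1 - lam)) + A * (1 + lam))
          / (p * (lam * (1 - lam))) := by
      field_simp
      ring
    rw [step, hN, zero_div]
  -- evenness of D2
  have hDeven : ∀ γ : ℤ, D2 (-γ) = D2 γ := by
    intro γ
    rw [hD, hD]
    simp [Int.natAbs_neg, neg_eq_zero]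
  -- shifted values
  have hDshift : ∀ j : ℕ, D2 ((j : ℤ) + 2) = A * lam / p * lam ^ j := by
    intro j
    rw [hD]
    have h0 : ((j : ℤ) + 2) ≠ 0 := by omega
    have h1 : ((j : ℤ) + 2).natAbs = j + 2 := by omega
    rw [if_neg h0, h1, if_neg (by omega)]
    have : j + 2 - 1 = j + 1 := by omega
    rw [this, pow_succ]
    ring
  -- the n = 0 sum
  have hgeo : HasSum (fun j : ℕ => A * lam / p * lam ^ j)
      (A * lam / p * (1 - lam)⁻¹) :=
    (hasSum_geometric_of_abs_lt_one hlt1).mul_left _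
  have hpos2 : HasSum (fun j : ℕ => D2 ((j : ℤ) + 2))
      (A * lam / p * (1 - lam)⁻¹) := by
    simpa only [hDshift] using hgeo
  have hposS : HasSum (fun j : ℕ => D2 (j : ℤ))
      (A * lam / p * (1 - lam)⁻¹ + (D2 0 + D2 1)) := by
    have h1 : HasSum (fun j : ℕ => D2 ((j + 2 : ℕ) : ℤ))
        (A * lam / p * (1 - lam)⁻¹) := by
      have hcast : ∀ j : ℕ, ((j + 2 : ℕ) : ℤ) = (j : ℤ) + 2 := by
        intro j; push_cast; ring
      simpa only [hcast] using hpos2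
    have h2 := (hasSum_nat_add_iff (f := fun j : ℕ => D2 (j : ℤ)) 2).mp h1
    convert h2 using 1
    · rfl
    simp [Finset.sum_range_succ]
  have hnegS : HasSum (fun j : ℕ => D2 (-((j : ℤ) + 1)))
      (A * lam / p * (1 - lam)⁻¹ + D2 1) := by
    have h1 := (hasSum_nat_add_iff (f := fun j : ℕ => D2 (j : ℤ))
        (g := A * lam / p * (1 - lam)⁻¹ + D2 1) 1).mpr
      (by
        convert hposS using 1
        · rfl
        simp only [Finset.sum_range_one, Nat.cast_zero]
        ring)
    have hcast : ∀ j : ℕ, ((j + 1 : ℕ) : ℤ) = (j : ℤ) + 1 := by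
      intro j; push_cast; ring
    simp only [hcast] at h1
    have heq : (fun j : ℕ => D2 (-((j : ℤ) + 1)))
        = fun j : ℕ => D2 ((j : ℤ) + 1) := by
      funext j; exact hDeven _
    rw [heq]
    exact h1
  -- total sum of D2 is zero
  have hval0 : D2 0 = (2 * C + A / lam) / p := by rw [hD]; simp
  have hval1 : D2 1 = (-2 * E + A) / p := by rw [hD]; norm_num
  have htot : HasSum D2 ((A * lam / p * (1 - lam)⁻¹ + (D2 0 + D2 1))
      + (A * lam / p * (1 - lam)⁻¹ + D2 1)) :=
    HasSum.of_nat_of_neg_add_one hposS hnegS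
  have hsumD : HasSum D2 0 := by
    have hzero : (A * lam / p * (1 - lam)⁻¹ + (D2 0 + D2 1))
        + (A * lam / p * (1 - lam)⁻¹ + D2 1) = 0 := by
      rw [hval0, hval1]
      linear_combination keyid
    rwa [hzero] at htot
  -- summability of γ ↦ γ * D2 γ and oddness
  have hs1 : Summable (fun j : ℕ => (j : ℝ) * lam ^ j) := by
    simpa using summable_pow_mul_geometric_of_norm_lt_one 1
      (r := lam) (by rwa [Real.norm_eq_abs])
  have hs2 : Summable (fun j : ℕ => lam ^ j) := summable_geometric_of_abs_lt_one hlt1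
  have hnat : Summable (fun j : ℕ => ((j : ℤ) : ℝ) * D2 (j : ℤ)) := by
    rw [← summable_nat_add_iff 2]
    have heq : (fun j : ℕ => (((j + 2 : ℕ) : ℤ) : ℝ) * D2 ((j + 2 : ℕ) : ℤ))
        = fun j : ℕ => (A * lam / p) * ((j : ℝ) * lam ^ j + 2 * lam ^ j) := by
      funext j
      have hcast : ((j + 2 : ℕ) : ℤ) = (j : ℤ) + 2 := by push_cast; ring
      rw [hcast, hDshift]
      push_cast
      ring
    rw [heq]
    exact (hs1.add (hs2.mul_left 2)).mul_left _
  have hsummable : Summable (fun γ : ℤ => (γ : ℝ) * D2 γ) := by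
    refine Summable.of_nat_of_neg_add_one ?_ ?_
    · exact hnat
    have heq : (fun j : ℕ => ((-((j : ℤ) + 1) : ℤ) : ℝ) * D2 (-((j : ℤ) + 1)))
        = fun j : ℕ => -((((j + 1 : ℕ) : ℤ) : ℝ) * D2 ((j + 1 : ℕ) : ℤ)) := by
      funext j
      have hcast : ((j + 1 : ℕ) : ℤ) = (j : ℤ) + 1 := by push_cast; ring
      rw [hcast, hDeven ((j : ℤ) + 1)]
      push_cast
      ring
    have h2 : Summable (fun j : ℕ => (((j + 1 : ℕ) : ℤ) : ℝ) * D2 ((j + 1 : ℕ) : ℤ)) :=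
      (summable_nat_add_iff 1).mpr hnat
    simpa only [heq] using h2.neg
  have hf0 : HasSum (fun γ : ℤ => (γ : ℝ) * D2 γ) 0 := by
    set f : ℤ → ℝ := fun γ => (γ : ℝ) * D2 γ with hfdef
    have hs := hsummable.hasSum
    have h2 : HasSum (f ∘ (Equiv.neg ℤ)) (∑' γ, f γ) :=
      (Equiv.neg ℤ).hasSum_iff.mpr hs
    have h3 : HasSum (fun γ : ℤ => -f γ) (∑' γ, f γ) := by
      convert h2 using 1
      funext γ
      show -f γ = f (-γ)
      rw [hfdef]
      simp only
      rw [hDeven]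
      push_cast
      ring
    have h4 := hs.neg
    have h5 : ∑' γ, f γ = 0 := by
      have := h3.unique h4
      linarith
    rwa [h5] at hs
  -- conclude
  interval_cases n
  · simpa using hsumD
  · have hcomb := (hsumD.mul_left (h * (β : ℝ))).sub (hf0.mul_left h)
    have : HasSum (fun γ : ℤ => h * (β : ℝ) * D2 γ - h * ((γ : ℝ) * D2 γ))
        (h * (β : ℝ) * 0 - h * 0) := hcomb
    convert this using 1
    · funext γ
      ring
    · ring
end
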